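/- Let A and P be real symmetric n×n matrices written as A = ν I + Σ_{i=1}^d c_i (I ⊗ H_i ⊗ I) and P = ν I + Σ_{i=1}^d c_i (I ⊗ τ_i ⊗ I) (Kronecker products with identity factors of matching sizes), where ν ≥ 0, c_i > 0, and each H_i, τ_i is symmetric positive definite with all eigenvalues of τ_i^{-1} H_i in (1/2, 3/2). Then every eigenvalue of P^{-1} A lies in (1/2, 3/2). -/

import Mathlib

open Matrix Kronecker

section Helpers

lemma posDef_of_posSemidef_isUnit {m : Type*} [Fintype m] [DecidableEq m]
    {M : Matrix m m ℝ} (h : M.PosSemidef) (hu : IsUnit M) : M.PosDef := by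
  refine .of_dotProduct_mulVec_pos h.1 fun x hx => ?_
  rcases (h.dotProduct_mulVec_nonneg x).lt_or_eq with hlt | heq
  · exact hlt
  · exact absurd ((Matrix.mulVec_injective_iff_isUnit.mpr hu)
      (((h.dotProduct_mulVec_zero_iff x).mp heq.symm).trans (Matrix.mulVec_zero M).symm)) hx

lemma posDef_of_spectrum_pos {m : Type*} [Fintype m] [DecidableEq m]
    {M : Matrix m m ℝ} (hM : M.IsHermitian)
    (h : ∀ μ ∈ spectrum ℝ M, 0 < μ) : M.PosDef := by
  have hev : ∀ i, 0 < hM.eigenvalues i := fun i => h _ (hM.eigenvalues_mem_spectrum_real i)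
  have hsd := hM.posSemidef_iff_eigenvalues_nonneg.mpr (fun i => (hev i).le)
  refine posDef_of_posSemidef_isUnit hsd ((Matrix.isUnit_iff_isUnit_det M).mpr ?_)
  rw [hM.det_eq_prod_eigenvalues]
  exact (Finset.prod_pos (fun i _ => hev i)).ne'.isUnit

lemma posDef_mul_mul {m : Type*} [Fintype m] [DecidableEq m]
    {A B : Matrix m m ℝ} (hA : A.PosDef) (hB : B.IsHermitian) (hBu : IsUnit B) :
    (B * A * B).PosDef := by
  have hBt : Bᵀ = B := by ext i j; simpa using congrFun (congrFun hB.eq i) j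
  refine .of_dotProduct_mulVec_pos (by rw [Matrix.IsHermitian, conjTranspose_mul, conjTranspose_mul, hA.1.eq, hB.eq,
    mul_assoc]) fun x hx => ?_
  have hx' : B *ᵥ x ≠ 0 := fun h0 => hx ((Matrix.mulVec_injective_iff_isUnit.mpr hBu)
    (h0.trans (Matrix.mulVec_zero B).symm))
  have h2 := hA.dotProduct_mulVec_pos hx'
  have hvm : x ᵥ* B = B *ᵥ x := by rw [← hBt, Matrix.vecMul_transpose, hBt]
  simpa [dotProduct_mulVec, ← Matrix.vecMul_vecMul, hvm, Matrix.mulVec_vecMul,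
    dotProduct_mulVec] using h2

lemma herm_shift_posDef {m : Type*} [Fintype m] [DecidableEq m]
    {M : Matrix m m ℝ} (hM : M.IsHermitian)
    (hs : ∀ μ ∈ spectrum ℝ M, μ ∈ Set.Ioo (1/2 : ℝ) (3/2)) :
    (M - (1/2 : ℝ) • 1).PosDef ∧ ((3/2 : ℝ) • 1 - M).PosDef := by
  have hh1 : ((1/2 : ℝ) • (1 : Matrix m m ℝ)).IsHermitian := by
    simp [Matrix.IsHermitian]
  have hh2 : ((3/2 : ℝ) • (1 : Matrix m m ℝ)).IsHermitian := by
    simp [Matrix.IsHermitian]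
  constructor
  · refine posDef_of_spectrum_pos (hM.sub hh1) ?_
    intro μ hμ
    rw [show (1/2 : ℝ) • (1 : Matrix m m ℝ) = algebraMap ℝ _ (1/2 : ℝ) by
      rw [Algebra.algebraMap_eq_smul_one], ← spectrum.sub_singleton_eq] at hμ
    obtain ⟨a, ha, b, hb, rfl⟩ := hμ
    rcases Set.mem_singleton_iff.mp hb
    have := (hs a ha).1
    linarith
  · refine posDef_of_spectrum_pos (hh2.sub hM) ?_
    intro μ hμ
    rw [show (3/2 : ℝ) • (1 : Matrix m m ℝ) = algebraMap ℝ _ (3/2 : ℝ) by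
      rw [Algebra.algebraMap_eq_smul_one], ← spectrum.singleton_sub_eq] at hμ
    obtain ⟨a, ha, b, hb, rfl⟩ := hμ
    rcases Set.mem_singleton_iff.mp ha
    have := (hs b hb).2
    linarith

open scoped MatrixOrder in
lemma key_posDef {m : Type*} [Fintype m] [DecidableEq m]
    {H T : Matrix m m ℝ} (hH : H.PosDef) (hT : T.PosDef)
    (hs : ∀ μ ∈ spectrum ℝ (T⁻¹ * H), μ ∈ Set.Ioo (1/2 : ℝ) (3/2)) :
    (H - (1/2 : ℝ) • T).PosDef ∧ ((3/2 : ℝ) • T - H).PosDef := by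
  set R := CFC.sqrt T with hRdef
  have hRs : R.PosSemidef := (CFC.sqrt_nonneg T).posSemidef
  have hRR : R * R = T := CFC.sqrt_mul_sqrt_self T hT.posSemidef.nonneg
  have hRu : IsUnit R := by
    rw [Matrix.isUnit_iff_isUnit_det]
    have hd : R.det * R.det = T.det := by rw [← Matrix.det_mul, hRR]
    refine (fun h : R.det ≠ 0 => h.isUnit) fun h0 => ?_
    rw [h0, mul_zero] at hd; exact hT.det_pos.ne hd
  have hRdu : IsUnit R.det := (Matrix.isUnit_iff_isUnit_det R).mp hRu
  have h1 : R⁻¹ * R = 1 := Matrix.nonsing_inv_mul R hRdu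
  have h2 : R * R⁻¹ = 1 := Matrix.mul_nonsing_inv R hRdu
  have hRinvH : (R⁻¹).IsHermitian := hRs.1.inv
  set M := R⁻¹ * H * R⁻¹ with hMdef
  have hMHerm : M.IsHermitian := by
    rw [Matrix.IsHermitian, hMdef, conjTranspose_mul, conjTranspose_mul, hH.1.eq, hRinvH.eq,
      mul_assoc]
  have hconj : T⁻¹ * H = R⁻¹ * M * R := by
    rw [hMdef, ← hRR, Matrix.mul_inv_rev]
    calc R⁻¹ * R⁻¹ * H = R⁻¹ * (R⁻¹ * (H * (R⁻¹ * R))) := by rw [h1]; simp [mul_assoc]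
    _ = R⁻¹ * (R⁻¹ * H * R⁻¹) * R := by simp only [mul_assoc]
  have hspecM : ∀ μ ∈ spectrum ℝ M, μ ∈ Set.Ioo (1/2 : ℝ) (3/2) := by
    intro μ hμ
    apply hs
    rw [hconj, show R⁻¹ * M * R = ↑hRu.unit⁻¹ * M * ↑hRu.unit by
      rw [Matrix.coe_units_inv, hRu.unit_spec]]
    rwa [spectrum.units_conjugate']
  obtain ⟨hp1, hp2⟩ := herm_shift_posDef hMHerm hspecM
  have hRMR : R * M * R = H := by
    rw [hMdef]
    calc R * (R⁻¹ * H * R⁻¹) * R = (R * R⁻¹) * (H * (R⁻¹ * R)) := by simp only [mul_assoc]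
    _ = H := by rw [h1, h2, mul_one, one_mul]
  constructor
  · have heq : H - (1/2 : ℝ) • T = R * (M - (1/2 : ℝ) • 1) * R := by
      rw [mul_sub, sub_mul, hRMR, Matrix.mul_smul, Matrix.smul_mul, mul_one, hRR]
    rw [heq]; exact posDef_mul_mul hp1 hRs.1 hRu
  · have heq : (3/2 : ℝ) • T - H = R * ((3/2 : ℝ) • 1 - M) * R := by
      rw [mul_sub, sub_mul, hRMR, Matrix.mul_smul, Matrix.smul_mul, mul_one, hRR]
    rw [heq]; exact posDef_mul_mul hp2 hRs.1 hRu

lemma kron_form_eq {pp qq rr : ℕ} (K : Matrix (Fin qq) (Fin qq) ℝ)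
    (y : ((Fin pp × Fin qq) × Fin rr) → ℝ) :
    y ⬝ᵥ (((1 : Matrix (Fin pp) (Fin pp) ℝ) ⊗ₖ K) ⊗ₖ (1 : Matrix (Fin rr) (Fin rr) ℝ)) *ᵥ y
      = ∑ a : Fin pp, ∑ c : Fin rr,
        (fun b => y ((a, b), c)) ⬝ᵥ K *ᵥ (fun b => y ((a, b), c)) := by
  simp only [dotProduct, Matrix.mulVec, Matrix.kroneckerMap_apply, Matrix.one_apply,
    Fintype.sum_prod_type, ite_mul, one_mul, zero_mul, mul_ite, mul_zero, mul_one,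
    Finset.sum_ite_irrel, Finset.sum_const_zero,
    Finset.sum_ite_eq, Finset.sum_ite_eq', Finset.mem_univ, if_true, Finset.mul_sum]
  exact Finset.sum_congr rfl fun a _ => Finset.sum_comm

lemma kron_form_nonneg {pp qq rr : ℕ} {K : Matrix (Fin qq) (Fin qq) ℝ} (hK : K.PosSemidef)
    (y : ((Fin pp × Fin qq) × Fin rr) → ℝ) :
    0 ≤ y ⬝ᵥ (((1 : Matrix (Fin pp) (Fin pp) ℝ) ⊗ₖ K) ⊗ₖ (1 : Matrix (Fin rr) (Fin rr) ℝ)) *ᵥ y := by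
  rw [kron_form_eq]
  refine Finset.sum_nonneg fun a _ => Finset.sum_nonneg fun c _ => ?_
  simpa using hK.dotProduct_mulVec_nonneg (fun b => y ((a, b), c))

lemma kron_form_pos {pp qq rr : ℕ} {K : Matrix (Fin qq) (Fin qq) ℝ} (hK : K.PosDef)
    {y : ((Fin pp × Fin qq) × Fin rr) → ℝ} (hy : y ≠ 0) :
    0 < y ⬝ᵥ (((1 : Matrix (Fin pp) (Fin pp) ℝ) ⊗ₖ K) ⊗ₖ (1 : Matrix (Fin rr) (Fin rr) ℝ)) *ᵥ y := by
  rw [kron_form_eq]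
  obtain ⟨⟨⟨a0, b0⟩, c0⟩, h0⟩ : ∃ u, y u ≠ 0 := by
    by_contra h; push_neg at h; exact hy (funext h)
  have hnn : ∀ a c, (0:ℝ) ≤ (fun b => y ((a, b), c)) ⬝ᵥ K *ᵥ (fun b => y ((a, b), c)) :=
    fun a c => by simpa using hK.posSemidef.dotProduct_mulVec_nonneg (fun b => y ((a, b), c))
  refine Finset.sum_pos' (fun a _ => Finset.sum_nonneg fun c _ => hnn a c)
    ⟨a0, Finset.mem_univ _, ?_⟩
  refine Finset.sum_pos' (fun c _ => hnn a0 c) ⟨c0, Finset.mem_univ _, ?_⟩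
  have hyne : (fun b => y ((a0, b), c0)) ≠ 0 := fun hz => h0 (congrFun hz b0)
  simpa using hK.dotProduct_mulVec_pos hyne

lemma reindex_form {n pp qq rr : ℕ} (e : Fin n ≃ (Fin pp × Fin qq) × Fin rr)
    (M : Matrix ((Fin pp × Fin qq) × Fin rr) ((Fin pp × Fin qq) × Fin rr) ℝ) (x : Fin n → ℝ) :
    x ⬝ᵥ (Matrix.reindex e.symm e.symm M) *ᵥ x = (x ∘ e.symm) ⬝ᵥ M *ᵥ (x ∘ e.symm) := by
  rw [Matrix.reindex_apply, Equiv.symm_symm, Matrix.submatrix_mulVec_equiv]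
  simp only [dotProduct, Function.comp_apply]
  exact Fintype.sum_equiv e _ _ fun i => by simp

lemma kron_middle_sub {pp qq rr : ℕ} (H T : Matrix (Fin qq) (Fin qq) ℝ) (t : ℝ) :
    ((1 : Matrix (Fin pp) (Fin pp) ℝ) ⊗ₖ (H - t • T)) ⊗ₖ (1 : Matrix (Fin rr) (Fin rr) ℝ)
      = (((1 : Matrix (Fin pp) (Fin pp) ℝ) ⊗ₖ H) ⊗ₖ (1 : Matrix (Fin rr) (Fin rr) ℝ))
        - t • (((1 : Matrix (Fin pp) (Fin pp) ℝ) ⊗ₖ T) ⊗ₖ (1 : Matrix (Fin rr) (Fin rr) ℝ)) := by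
  ext u v
  simp only [Matrix.kroneckerMap_apply, Matrix.sub_apply, Matrix.smul_apply, smul_eq_mul]
  ring

lemma form_sub_smul {m : Type*} [Fintype m] (M N : Matrix m m ℝ) (t : ℝ) (x : m → ℝ) :
    x ⬝ᵥ (M - t • N) *ᵥ x = x ⬝ᵥ M *ᵥ x - t * (x ⬝ᵥ N *ᵥ x) := by
  rw [Matrix.sub_mulVec, dotProduct_sub, Matrix.smul_mulVec,
    dotProduct_smul, smul_eq_mul]

lemma dot_sum_mulVec {m : Type*} [Fintype m] {ι : Type*} (s : Finset ι)
    (N : ι → Matrix m m ℝ) (x : m → ℝ) :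
    x ⬝ᵥ (∑ i ∈ s, N i) *ᵥ x = ∑ i ∈ s, x ⬝ᵥ (N i) *ᵥ x := by
  classical
  induction s using Finset.induction_on with
  | empty => simp
  | insert a s h ih =>
    rw [Finset.sum_insert h, Finset.sum_insert h, Matrix.add_mulVec, dotProduct_add, ih]

lemma form_smul_sub {m : Type*} [Fintype m] (M N : Matrix m m ℝ) (t : ℝ) (x : m → ℝ) :
    x ⬝ᵥ (t • N - M) *ᵥ x = t * (x ⬝ᵥ N *ᵥ x) - x ⬝ᵥ M *ᵥ x := by
  rw [Matrix.sub_mulVec, dotProduct_sub, Matrix.smul_mulVec,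
    dotProduct_smul, smul_eq_mul]

lemma kron_middle_smul_sub {pp qq rr : ℕ} (H T : Matrix (Fin qq) (Fin qq) ℝ) (t : ℝ) :
    ((1 : Matrix (Fin pp) (Fin pp) ℝ) ⊗ₖ (t • T - H)) ⊗ₖ (1 : Matrix (Fin rr) (Fin rr) ℝ)
      = t • (((1 : Matrix (Fin pp) (Fin pp) ℝ) ⊗ₖ T) ⊗ₖ (1 : Matrix (Fin rr) (Fin rr) ℝ))
        - (((1 : Matrix (Fin pp) (Fin pp) ℝ) ⊗ₖ H) ⊗ₖ (1 : Matrix (Fin rr) (Fin rr) ℝ)) := by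
  ext u v
  simp only [Matrix.kroneckerMap_apply, Matrix.sub_apply, Matrix.smul_apply, smul_eq_mul]
  ring

end Helpers

theorem spectrum_PinvA_kronecker (n d : ℕ) (hd : 0 < d)
    (p q r : Fin d → ℕ)
    (e : ∀ i : Fin d, Fin n ≃ (Fin (p i) × Fin (q i)) × Fin (r i))
    (H τm : ∀ i : Fin d, Matrix (Fin (q i)) (Fin (q i)) ℝ)
    (hH : ∀ i, (H i).PosDef) (hτ : ∀ i, (τm i).PosDef)
    (hspec : ∀ i, ∀ μ ∈ spectrum ℝ ((τm i)⁻¹ * H i), μ ∈ Set.Ioo (1 / 2 : ℝ) (3 / 2))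
    (ν : ℝ) (hν : 0 ≤ ν) (c : Fin d → ℝ) (hc : ∀ i, 0 < c i)
    (A P : Matrix (Fin n) (Fin n) ℝ)
    (hA : A = ν • (1 : Matrix (Fin n) (Fin n) ℝ) + ∑ i, c i •
      (Matrix.reindex (e i).symm (e i).symm
        (((1 : Matrix (Fin (p i)) (Fin (p i)) ℝ) ⊗ₖ H i) ⊗ₖ (1 : Matrix (Fin (r i)) (Fin (r i)) ℝ))))
    (hP : P = ν • (1 : Matrix (Fin n) (Fin n) ℝ) + ∑ i, c i •
      (Matrix.reindex (e i).symm (e i).symm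
        (((1 : Matrix (Fin (p i)) (Fin (p i)) ℝ) ⊗ₖ τm i) ⊗ₖ (1 : Matrix (Fin (r i)) (Fin (r i)) ℝ))))
    (hAsymm : A.IsSymm) (hPsymm : P.IsSymm) :
    ∀ μ ∈ spectrum ℝ (P⁻¹ * A), μ ∈ Set.Ioo (1 / 2 : ℝ) (3 / 2) := by
  classical
  have hne : Nonempty (Fin d) := ⟨⟨0, hd⟩⟩
  -- quadratic form expansions
  have hform : ∀ (ν' : ℝ) (K : ∀ i : Fin d, Matrix (Fin (q i)) (Fin (q i)) ℝ) (x : Fin n → ℝ),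
      x ⬝ᵥ (ν' • (1 : Matrix (Fin n) (Fin n) ℝ) + ∑ i, c i •
        (Matrix.reindex (e i).symm (e i).symm
          (((1 : Matrix (Fin (p i)) (Fin (p i)) ℝ) ⊗ₖ K i) ⊗ₖ
            (1 : Matrix (Fin (r i)) (Fin (r i)) ℝ)))) *ᵥ x
      = ν' * (x ⬝ᵥ x) + ∑ i, c i * ((x ∘ (e i).symm) ⬝ᵥ
          (((1 : Matrix (Fin (p i)) (Fin (p i)) ℝ) ⊗ₖ K i) ⊗ₖ
            (1 : Matrix (Fin (r i)) (Fin (r i)) ℝ)) *ᵥ (x ∘ (e i).symm)) := by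
    intro ν' K x
    rw [Matrix.add_mulVec, dotProduct_add]
    congr 1
    · rw [Matrix.smul_mulVec, Matrix.one_mulVec, dotProduct_smul, smul_eq_mul]
    · rw [dot_sum_mulVec]
      refine Finset.sum_congr rfl fun i _ => ?_
      rw [Matrix.smul_mulVec, dotProduct_smul, smul_eq_mul, reindex_form]
  have hslice_ne : ∀ (i : Fin d) {x : Fin n → ℝ}, x ≠ 0 → x ∘ (e i).symm ≠ 0 := by
    intro i x hx h0
    exact hx (funext fun k => by simpa using congrFun h0 ((e i) k))
  have hdotself : ∀ x : Fin n → ℝ, (0:ℝ) ≤ x ⬝ᵥ x :=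
    fun x => Finset.sum_nonneg fun i _ => mul_self_nonneg _
  -- P is positive definite
  have hPpos : ∀ x : Fin n → ℝ, x ≠ 0 → 0 < x ⬝ᵥ P *ᵥ x := by
    intro x hx
    rw [hP, hform]
    have hsum : 0 < ∑ i, c i * ((x ∘ (e i).symm) ⬝ᵥ
        (((1 : Matrix (Fin (p i)) (Fin (p i)) ℝ) ⊗ₖ τm i) ⊗ₖ
          (1 : Matrix (Fin (r i)) (Fin (r i)) ℝ)) *ᵥ (x ∘ (e i).symm)) :=
      Finset.sum_pos (fun i _ => mul_pos (hc i) (kron_form_pos (hτ i) (hslice_ne i hx)))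
        Finset.univ_nonempty
    have := mul_nonneg hν (hdotself x)
    linarith
  have hPherm : P.IsHermitian := by
    have h1 : Pᴴ = Pᵀ := by ext i j; simp [Matrix.conjTranspose_apply]
    rw [Matrix.IsHermitian, h1, hPsymm]
  have hPd : P.PosDef := .of_dotProduct_mulVec_pos hPherm fun x hx => by simpa using hPpos x hx
  have hPdu : IsUnit P.det := (Matrix.isUnit_iff_isUnit_det P).mp hPd.isUnit
  -- extract eigenvector
  intro μ hμ
  rw [spectrum.mem_iff] at hμ
  have hdet : (algebraMap ℝ (Matrix (Fin n) (Fin n) ℝ) μ - P⁻¹ * A).det = 0 := by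
    by_contra hne'
    exact hμ ((Matrix.isUnit_iff_isUnit_det _).mpr (isUnit_iff_ne_zero.mpr hne'))
  obtain ⟨v, hveq, hv0⟩ := Matrix.exists_mulVec_eq_zero_iff.mpr hdet
  have hvec : (P⁻¹ * A) *ᵥ v = μ • v := by
    have h := hv0
    rw [Matrix.sub_mulVec, sub_eq_zero] at h
    rw [← h, Algebra.algebraMap_eq_smul_one, Matrix.smul_mulVec, Matrix.one_mulVec]
  have hAv : A *ᵥ v = μ • (P *ᵥ v) := by
    have hPA : P * (P⁻¹ * A) = A := by
      rw [← mul_assoc, Matrix.mul_nonsing_inv _ hPdu, one_mul]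
    calc A *ᵥ v = (P * (P⁻¹ * A)) *ᵥ v := by rw [hPA]
    _ = P *ᵥ ((P⁻¹ * A) *ᵥ v) := by rw [Matrix.mulVec_mulVec]
    _ = μ • (P *ᵥ v) := by rw [hvec, Matrix.mulVec_smul]
  have hquad : v ⬝ᵥ A *ᵥ v = μ * (v ⬝ᵥ P *ᵥ v) := by
    rw [hAv, dotProduct_smul, smul_eq_mul]
  -- per-factor strict bounds
  have hboth := fun i => key_posDef (hH i) (hτ i) (by
    intro μ' hμ'
    have := hspec i μ' hμ'
    simpa using this)
  have hlowterm : ∀ i : Fin d,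
      (1/2 : ℝ) * ((v ∘ (e i).symm) ⬝ᵥ (((1 : Matrix (Fin (p i)) (Fin (p i)) ℝ) ⊗ₖ τm i) ⊗ₖ
          (1 : Matrix (Fin (r i)) (Fin (r i)) ℝ)) *ᵥ (v ∘ (e i).symm))
      < (v ∘ (e i).symm) ⬝ᵥ (((1 : Matrix (Fin (p i)) (Fin (p i)) ℝ) ⊗ₖ H i) ⊗ₖ
          (1 : Matrix (Fin (r i)) (Fin (r i)) ℝ)) *ᵥ (v ∘ (e i).symm) := by
    intro i
    have hpos := kron_form_pos (hboth i).1 (hslice_ne i hveq)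
    rw [kron_middle_sub, form_sub_smul] at hpos
    linarith
  have hhighterm : ∀ i : Fin d,
      (v ∘ (e i).symm) ⬝ᵥ (((1 : Matrix (Fin (p i)) (Fin (p i)) ℝ) ⊗ₖ H i) ⊗ₖ
          (1 : Matrix (Fin (r i)) (Fin (r i)) ℝ)) *ᵥ (v ∘ (e i).symm)
      < (3/2 : ℝ) * ((v ∘ (e i).symm) ⬝ᵥ (((1 : Matrix (Fin (p i)) (Fin (p i)) ℝ) ⊗ₖ τm i) ⊗ₖ
          (1 : Matrix (Fin (r i)) (Fin (r i)) ℝ)) *ᵥ (v ∘ (e i).symm)) := by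
    intro i
    have hpos := kron_form_pos (hboth i).2 (hslice_ne i hveq)
    rw [kron_middle_smul_sub, form_smul_sub] at hpos
    linarith
  have hAform : v ⬝ᵥ A *ᵥ v = ν * (v ⬝ᵥ v) + ∑ i, c i * ((v ∘ (e i).symm) ⬝ᵥ
      (((1 : Matrix (Fin (p i)) (Fin (p i)) ℝ) ⊗ₖ H i) ⊗ₖ
        (1 : Matrix (Fin (r i)) (Fin (r i)) ℝ)) *ᵥ (v ∘ (e i).symm)) := by
    rw [hA]; exact hform ν H v
  have hPform : v ⬝ᵥ P *ᵥ v = ν * (v ⬝ᵥ v) + ∑ i, c i * ((v ∘ (e i).symm) ⬝ᵥ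
      (((1 : Matrix (Fin (p i)) (Fin (p i)) ℝ) ⊗ₖ τm i) ⊗ₖ
        (1 : Matrix (Fin (r i)) (Fin (r i)) ℝ)) *ᵥ (v ∘ (e i).symm)) := by
    rw [hP]; exact hform ν τm v
  have hs : 0 < v ⬝ᵥ P *ᵥ v := hPpos v hveq
  have hνt : 0 ≤ ν * (v ⬝ᵥ v) := mul_nonneg hν (hdotself v)
  have hsumlow : ∑ i, c i * ((1/2 : ℝ) * ((v ∘ (e i).symm) ⬝ᵥ
      (((1 : Matrix (Fin (p i)) (Fin (p i)) ℝ) ⊗ₖ τm i) ⊗ₖ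
        (1 : Matrix (Fin (r i)) (Fin (r i)) ℝ)) *ᵥ (v ∘ (e i).symm)))
      < ∑ i, c i * ((v ∘ (e i).symm) ⬝ᵥ
      (((1 : Matrix (Fin (p i)) (Fin (p i)) ℝ) ⊗ₖ H i) ⊗ₖ
        (1 : Matrix (Fin (r i)) (Fin (r i)) ℝ)) *ᵥ (v ∘ (e i).symm)) :=
    Finset.sum_lt_sum_of_nonempty Finset.univ_nonempty
      (fun i _ => mul_lt_mul_of_pos_left (hlowterm i) (hc i))
  have hsumhigh : ∑ i, c i * ((v ∘ (e i).symm) ⬝ᵥ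
      (((1 : Matrix (Fin (p i)) (Fin (p i)) ℝ) ⊗ₖ H i) ⊗ₖ
        (1 : Matrix (Fin (r i)) (Fin (r i)) ℝ)) *ᵥ (v ∘ (e i).symm))
      < ∑ i, c i * ((3/2 : ℝ) * ((v ∘ (e i).symm) ⬝ᵥ
      (((1 : Matrix (Fin (p i)) (Fin (p i)) ℝ) ⊗ₖ τm i) ⊗ₖ
        (1 : Matrix (Fin (r i)) (Fin (r i)) ℝ)) *ᵥ (v ∘ (e i).symm))) :=
    Finset.sum_lt_sum_of_nonempty Finset.univ_nonempty
      (fun i _ => mul_lt_mul_of_pos_left (hhighterm i) (hc i))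
  have hhalf : ∑ i, c i * ((1/2 : ℝ) * ((v ∘ (e i).symm) ⬝ᵥ
      (((1 : Matrix (Fin (p i)) (Fin (p i)) ℝ) ⊗ₖ τm i) ⊗ₖ
        (1 : Matrix (Fin (r i)) (Fin (r i)) ℝ)) *ᵥ (v ∘ (e i).symm)))
      = (1/2 : ℝ) * ∑ i, c i * ((v ∘ (e i).symm) ⬝ᵥ
      (((1 : Matrix (Fin (p i)) (Fin (p i)) ℝ) ⊗ₖ τm i) ⊗ₖ
        (1 : Matrix (Fin (r i)) (Fin (r i)) ℝ)) *ᵥ (v ∘ (e i).symm)) := by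
    rw [Finset.mul_sum]; exact Finset.sum_congr rfl fun i _ => by ring
  have hthreehalf : ∑ i, c i * ((3/2 : ℝ) * ((v ∘ (e i).symm) ⬝ᵥ
      (((1 : Matrix (Fin (p i)) (Fin (p i)) ℝ) ⊗ₖ τm i) ⊗ₖ
        (1 : Matrix (Fin (r i)) (Fin (r i)) ℝ)) *ᵥ (v ∘ (e i).symm)))
      = (3/2 : ℝ) * ∑ i, c i * ((v ∘ (e i).symm) ⬝ᵥ
      (((1 : Matrix (Fin (p i)) (Fin (p i)) ℝ) ⊗ₖ τm i) ⊗ₖ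
        (1 : Matrix (Fin (r i)) (Fin (r i)) ℝ)) *ᵥ (v ∘ (e i).symm)) := by
    rw [Finset.mul_sum]; exact Finset.sum_congr rfl fun i _ => by ring
  rw [hhalf] at hsumlow
  rw [hthreehalf] at hsumhigh
  have hlow : (1/2 : ℝ) * (v ⬝ᵥ P *ᵥ v) < v ⬝ᵥ A *ᵥ v := by
    rw [hAform, hPform]; linarith
  have hhigh : v ⬝ᵥ A *ᵥ v < (3/2 : ℝ) * (v ⬝ᵥ P *ᵥ v) := by
    rw [hAform, hPform]; linarith
  rw [hquad] at hlow hhigh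
  constructor
  · exact (mul_lt_mul_iff_of_pos_right hs).mp hlow
  · exact (mul_lt_mul_iff_of_pos_right hs).mp hhigh
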